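/- Let B be an open disk in ℝ² and let w, p ∈ closure(B) with w ≠ p. Let B_{wp} denote the open disk having the segment (w, p) as a diameter. Let a ∈ ℝ² \ ((B ∩ B_{wp}) ∪ {p}) be such that ‖a − p‖ ≤ ‖a − w‖ and γ(w, p, a) ≤ π/2. Then sin γ(w, p, a) ≥ (√2/4)·‖w − p‖/diam(B). -/

import Mathlib

noncomputable section

open EuclideanGeometry

local notation "⟪" x ", " y "⟫" => @inner ℝ _ _ x y

private lemma keyA' (d R x t : ℝ) (hd : 0 < d) (hdR : d ≤ 2*R)
    (h4 : d*x ≤ x^2 + t^2) (hx0 : 0 ≤ x) (hx2 : 2*x ≤ d) :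
    d^2*x^2 ≤ (32*R^2 - d^2)*t^2 := by
  have hR : 0 < R := by linarith
  have hx2' : x^2 ≤ t^2 := by nlinarith
  have e1 : d^2*x^2 ≤ d^2*t^2 := by nlinarith [sq_nonneg d]
  have e2 : d^2 ≤ 4*R^2 := by nlinarith
  have e3 : d^2*t^2 ≤ (32*R^2-d^2)*t^2 := by nlinarith [sq_nonneg t]
  linarith

private lemma keyB2' (d R x t : ℝ) (hd : 0 < d) (hx0 : 0 < x) (hx2 : 2*x ≤ d)
    (hKpos : 0 < d*x - x^2 - t^2)
    (hkey : (d*x - x^2 - t^2)^2 ≤ t^2*(4*R^2 - d^2))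
    (hd2 : d^2 ≤ 4*R^2) :
    d^2*x^2 ≤ (32*R^2 - d^2)*t^2 := by
  rcases le_or_gt (2*t^2) (d*x) with hc | hc
  · have e1 : 0 ≤ d*x - 2*x^2 := by nlinarith
    have e2 : 0 ≤ d*x/2 - t^2 := by linarith
    have e3 : (d*x/2 - t^2)^2 ≤ (d*x - x^2 - t^2)^2 := by
      have h : d*x/2 - t^2 ≤ d*x - x^2 - t^2 := by linarith
      exact pow_le_pow_left₀ e2 h 2
    have h7 : 0 ≤ 7*d^2 - 8*d*x := by nlinarith
    have e4 : d^2*x^2 ≤ 8*(d*x/2 - t^2)^2 + 7*d^2*t^2 := by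
      nlinarith [mul_nonneg (sq_nonneg t) h7]
    linarith
  · have hx2' : x^2 ≤ t^2 := by nlinarith
    have e1 : d^2*x^2 ≤ d^2*t^2 := by nlinarith [sq_nonneg d]
    have e3 : d^2*t^2 ≤ (32*R^2-d^2)*t^2 := by nlinarith [sq_nonneg t]
    linarith

private lemma keyB' (d R x t c₁ m s : ℝ) (hd : 0 < d)
    (h1 : c₁^2 + m^2 ≤ R^2)
    (h2 : (d-c₁)^2 + m^2 ≤ R^2)
    (h3 : R^2 ≤ (x-c₁)^2 + t^2 - 2*s + m^2)
    (hs : s^2 ≤ t^2*m^2)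
    (h4 : x^2 + t^2 < d*x)
    (hx2 : 2*x ≤ d) :
    d^2*x^2 ≤ (32*R^2 - d^2)*t^2 := by
  have hx0 : 0 < x := by nlinarith
  have hK : d*x - x^2 ≤ t^2 - 2*s := by
    nlinarith [mul_le_mul_of_nonneg_left h1 (show (0:ℝ) ≤ d - x by linarith),
      mul_le_mul_of_nonneg_left h2 hx0.le,
      mul_le_mul_of_nonneg_left h3 hd.le]
  have hKpos : 0 < d*x - x^2 - t^2 := by nlinarith
  have hs2 : (d*x - x^2 - t^2)^2 ≤ 4*s^2 := by nlinarith
  have hm2 : 4*m^2 ≤ 4*R^2 - d^2 := by nlinarith [sq_nonneg (2*c₁ - d)]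
  have hd2 : d^2 ≤ 4*R^2 := by nlinarith [sq_nonneg m]
  have hkey : (d*x - x^2 - t^2)^2 ≤ t^2*(4*R^2 - d^2) := by nlinarith [sq_nonneg t]
  exact keyB2' d R x t hd hx0 hx2 hKpos hkey hd2

private lemma diam_ball_ge (c₀ : EuclideanSpace ℝ (Fin 2)) (R : ℝ) (hR : 0 < R) :
    2*R ≤ Metric.diam (Metric.ball c₀ R) := by
  have hsub : ∀ t : ℝ, 0 ≤ t → t < R → 2*t ≤ Metric.diam (Metric.ball c₀ R) := by
    intro t ht htR
    set e : EuclideanSpace ℝ (Fin 2) := EuclideanSpace.single 0 1 with he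
    have hne : ‖e‖ = 1 := by rw [he, EuclideanSpace.norm_single]; norm_num
    have h1 : c₀ + t • e ∈ Metric.ball c₀ R := by
      rw [Metric.mem_ball, dist_eq_norm]
      simp only [add_sub_cancel_left, norm_smul, hne, Real.norm_eq_abs, abs_of_nonneg ht]
      simpa using htR
    have h2 : c₀ - t • e ∈ Metric.ball c₀ R := by
      rw [Metric.mem_ball, dist_eq_norm]
      simp only [sub_sub_cancel_left, norm_neg, norm_smul, hne, Real.norm_eq_abs,
        abs_of_nonneg ht]
      simpa using htR
    have hdist : dist (c₀ + t • e) (c₀ - t • e) = 2*t := by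
      rw [dist_eq_norm]
      have : (c₀ + t • e) - (c₀ - t • e) = (2*t) • e := by
        rw [two_mul, add_smul]; abel
      rw [this, norm_smul, hne, Real.norm_eq_abs, abs_of_nonneg (by linarith)]
      ring
    calc 2*t = dist (c₀ + t • e) (c₀ - t • e) := hdist.symm
      _ ≤ Metric.diam (Metric.ball c₀ R) :=
          Metric.dist_le_diam_of_mem Metric.isBounded_ball h1 h2
  by_contra h
  push_neg at h
  have hD0 : 0 ≤ Metric.diam (Metric.ball c₀ R) := Metric.diam_nonneg
  set D := Metric.diam (Metric.ball c₀ R) with hD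
  have := hsub ((D/2 + R)/2) (by linarith) (by linarith)
  linarith

set_option maxHeartbeats 1000000 in
theorem stmt11 (c₀ : EuclideanSpace ℝ (Fin 2)) (R : ℝ) (hR : 0 < R)
    (w p : EuclideanSpace ℝ (Fin 2))
    (hw : w ∈ closure (Metric.ball c₀ R)) (hp : p ∈ closure (Metric.ball c₀ R))
    (hwp : w ≠ p)
    (a : EuclideanSpace ℝ (Fin 2))
    (ha : a ∉ Metric.ball c₀ R ∩ Metric.ball (midpoint ℝ w p) (dist w p / 2))
    (hap : a ≠ p)
    (hle : dist a p ≤ dist a w)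
    (hangle : ∠ w p a ≤ Real.pi / 2) :
    Real.sqrt 2 / 4 * (dist w p / Metric.diam (Metric.ball c₀ R)) ≤
      Real.sin (∠ w p a) := by
  have hd : (0:ℝ) < dist w p := dist_pos.2 hwp
  set d : ℝ := dist w p with hdd
  set u : EuclideanSpace ℝ (Fin 2) := w - p with hu
  set A : EuclideanSpace ℝ (Fin 2) := a - p with hA
  set C : EuclideanSpace ℝ (Fin 2) := c₀ - p with hC
  have hun : ‖u‖ = d := by rw [hu, hdd, dist_eq_norm]
  have hAne : A ≠ 0 := sub_ne_zero.2 hap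
  have hApos : 0 < ‖A‖ := norm_pos_iff.2 hAne
  have hangeq : ∠ w p a = InnerProductGeometry.angle u A := by
    rw [EuclideanGeometry.angle, vsub_eq_sub, vsub_eq_sub]
  -- scalar quantities
  set P : ℝ := ⟪u, A⟫ with hP
  set G : ℝ := ⟪u, C⟫ with hG
  set x : ℝ := P / d with hx
  set c₁ : ℝ := G / d with hc₁
  set v : EuclideanSpace ℝ (Fin 2) := A - (P/d^2) • u with hv
  set Cp : EuclideanSpace ℝ (Fin 2) := C - (G/d^2) • u with hCp
  set t : ℝ := ‖v‖ with ht
  set m : ℝ := ‖Cp‖ with hm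
  set s : ℝ := ⟪v, Cp⟫ with hs
  have huu : ⟪u, u⟫ = d^2 := by rw [real_inner_self_eq_norm_sq, hun]
  have ht2 : t^2 = ‖A‖^2 - x^2 := by
    have h0 : ⟪v, v⟫ = ⟪A, A⟫ - 2*((P/d^2)*P) + (P/d^2)*(P/d^2)*d^2 := by
      rw [hv]
      simp only [inner_sub_left, inner_sub_right, real_inner_smul_left,
        real_inner_smul_right, huu, real_inner_comm u A, ← hP]
      ring
    have h1 : t^2 = ‖A‖^2 - 2*((P/d^2)*P) + (P/d^2)*(P/d^2)*d^2 := by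
      rw [ht, ← real_inner_self_eq_norm_sq, ← real_inner_self_eq_norm_sq]
      exact h0
    rw [h1, hx]; field_simp; ring
  have hm2 : m^2 = ‖C‖^2 - c₁^2 := by
    have h0 : ⟪Cp, Cp⟫ = ⟪C, C⟫ - 2*((G/d^2)*G) + (G/d^2)*(G/d^2)*d^2 := by
      rw [hCp]
      simp only [inner_sub_left, inner_sub_right, real_inner_smul_left,
        real_inner_smul_right, huu, real_inner_comm u C, ← hG]
      ring
    have h1 : m^2 = ‖C‖^2 - 2*((G/d^2)*G) + (G/d^2)*(G/d^2)*d^2 := by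
      rw [hm, ← real_inner_self_eq_norm_sq, ← real_inner_self_eq_norm_sq]
      exact h0
    rw [h1, hc₁]; field_simp; ring
  have hseq : ⟪A, C⟫ = x*c₁ + s := by
    have h1 : s = ⟪A, C⟫ - (G/d^2)*P - (P/d^2)*G + (P/d^2)*(G/d^2)*d^2 := by
      rw [hs, hv, hCp]
      simp only [inner_sub_left, inner_sub_right, real_inner_smul_left,
        real_inner_smul_right, huu, real_inner_comm u A, real_inner_comm u C,
        ← hP, ← hG]
      ring
    rw [h1, hx, hc₁]; field_simp; ring
  have hsCS : s^2 ≤ t^2 * m^2 := by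
    have h := real_inner_mul_inner_self_le v Cp
    rw [real_inner_self_eq_norm_sq, real_inner_self_eq_norm_sq] at h
    rw [pow_two]
    exact h
  have hAA : ‖A‖^2 = x^2 + t^2 := by rw [ht2]; ring
  -- hypotheses in scalar form
  have hpn : ‖C‖ ≤ R := by
    have := Metric.closure_ball_subset_closedBall hp
    rw [Metric.mem_closedBall, dist_comm, dist_eq_norm] at this
    rwa [hC]
  have hwn : ‖u - C‖ ≤ R := by
    have := Metric.closure_ball_subset_closedBall hw
    rw [Metric.mem_closedBall, dist_eq_norm] at this
    have he : u - C = w - c₀ := by rw [hu, hC]; abel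
    rwa [he]
  have h1 : c₁^2 + m^2 ≤ R^2 := by
    have := pow_le_pow_left₀ (norm_nonneg C) hpn 2
    rw [hm2]; linarith
  have hG2 : ‖u - C‖^2 = d^2 - 2*G + ‖C‖^2 := by
    rw [show ‖u - C‖^2 = ‖u‖^2 - 2*⟪u, C⟫ + ‖C‖^2 from norm_sub_sq_real u C, ← hG, hun]
  have hdc : d * c₁ = G := by rw [hc₁]; field_simp
  have h2 : (d - c₁)^2 + m^2 ≤ R^2 := by
    have h2' := pow_le_pow_left₀ (norm_nonneg (u - C)) hwn 2
    rw [hG2] at h2'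
    rw [hm2]
    have e : (d - c₁)^2 + (‖C‖^2 - c₁^2) = d^2 - 2*G + ‖C‖^2 := by
      rw [← hdc]; ring
    rw [e]
    exact h2'
  -- x ≥ 0 from the angle condition
  have hP0 : 0 ≤ P := by
    have hcos : 0 ≤ Real.cos (∠ w p a) := by
      apply Real.cos_nonneg_of_mem_Icc
      constructor
      · have := EuclideanGeometry.angle_nonneg w p a
        have hpi := Real.pi_pos
        linarith
      · exact hangle
    have := InnerProductGeometry.cos_angle_mul_norm_mul_norm u A
    rw [← hangeq] at this
    rw [hP, ← this]
    positivity
  have hx0 : 0 ≤ x := by rw [hx]; positivity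
  -- 2x ≤ d from hle
  have hdx : d * x = P := by rw [hx]; field_simp
  have h2P : 2*P ≤ d^2 := by
    rw [dist_eq_norm, dist_eq_norm] at hle
    have he : a - w = A - u := by rw [hA, hu]; abel
    rw [he, ← hA] at hle
    have h2' := pow_le_pow_left₀ (norm_nonneg A) hle 2
    rw [show ‖A - u‖^2 = ‖A‖^2 - 2*⟪A, u⟫ + ‖u‖^2 from norm_sub_sq_real A u,
      real_inner_comm u A, ← hP, hun] at h2'
    linarith
  have hx2 : 2*x ≤ d := by
    rw [hx, ← mul_div_assoc, div_le_iff₀ hd]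
    linarith [h2P, pow_two d]
  -- the key inequality
  have hmid : dist a (midpoint ℝ w p) = ‖A - (1/2 : ℝ) • u‖ := by
    rw [dist_eq_norm]
    congr 1
    rw [midpoint_eq_smul_add, invOf_eq_inv, hA, hu]
    module
  have hmid2 : ‖A - (1/2 : ℝ) • u‖^2 = ‖A‖^2 - P + d^2/4 := by
    rw [show ‖A - (1/2:ℝ) • u‖^2 = ‖A‖^2 - 2*⟪A, (1/2:ℝ) • u⟫ + ‖(1/2:ℝ) • u‖^2 from
      norm_sub_sq_real A _]
    rw [real_inner_smul_right, real_inner_comm u A, ← hP, norm_smul, Real.norm_eq_abs, hun]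
    rw [abs_of_nonneg (by norm_num : (0:ℝ) ≤ (1:ℝ)/2)]
    ring
  have hkey : d^2*x^2 ≤ (32*R^2 - d^2)*t^2 := by
    by_cases hmem : a ∈ Metric.ball (midpoint ℝ w p) (dist w p / 2)
    · -- then a ∉ ball c₀ R : case B
      have haout : R ≤ dist a c₀ := by
        by_contra hlt
        push_neg at hlt
        exact ha ⟨Metric.mem_ball.2 hlt, hmem⟩
      have h4 : x^2 + t^2 < d*x := by
        rw [Metric.mem_ball, hmid] at hmem
        have hsq := pow_lt_pow_left₀ hmem (norm_nonneg _) (by norm_num : (2:ℕ) ≠ 0)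
        rw [hmid2] at hsq
        have e : (d/2)^2 = d^2/4 := by ring
        rw [e] at hsq
        have hh : ‖A‖^2 < P := by linarith
        rw [hAA] at hh; rw [hdx]; linarith
      have h3 : R^2 ≤ (x - c₁)^2 + t^2 - 2*s + m^2 := by
        have hac : dist a c₀ = ‖A - C‖ := by
          rw [dist_eq_norm]; congr 1; rw [hA, hC]; abel
        rw [hac] at haout
        have h3' := pow_le_pow_left₀ hR.le haout 2
        rw [show ‖A - C‖^2 = ‖A‖^2 - 2*⟪A, C⟫ + ‖C‖^2 from norm_sub_sq_real A C,
          hseq] at h3'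
        have hgc : ‖C‖^2 = c₁^2 + m^2 := by rw [hm2]; ring
        rw [hAA, hgc] at h3'
        have e : (x - c₁)^2 + t^2 - 2*s + m^2 = x^2 + t^2 - 2*(x*c₁ + s) + (c₁^2 + m^2) := by
          rw [hm2]; ring
        rw [hm2] at e ⊢
        linarith [h3', e.le, e.ge]
      exact keyB' d R x t c₁ m s hd h1 h2 h3 hsCS h4 hx2
    · -- case A
      have h4 : d*x ≤ x^2 + t^2 := by
        rw [Metric.mem_ball, not_lt, hmid] at hmem
        have hsq := pow_le_pow_left₀ (by positivity) hmem 2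
        rw [hmid2] at hsq
        have e : (d/2)^2 = d^2/4 := by ring
        rw [e] at hsq
        have hh : P ≤ ‖A‖^2 := by linarith
        rw [hAA] at hh; rw [hdx]; linarith
      have hdR : d ≤ 2*R := by
        have e : u - C + C = u := by abel
        calc d = ‖u‖ := hun.symm
          _ = ‖(u - C) + C‖ := by rw [e]
          _ ≤ ‖u - C‖ + ‖C‖ := norm_add_le _ _
          _ ≤ 2*R := by linarith
      exact keyA' d R x t hd hdR h4 hx0 hx2
  -- convert to the sine inequality
  have hsin0 : 0 ≤ Real.sin (∠ w p a) :=
    Real.sin_nonneg_of_nonneg_of_le_pi (EuclideanGeometry.angle_nonneg w p a)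
      (EuclideanGeometry.angle_le_pi w p a)
  have hdiam : 2*R ≤ Metric.diam (Metric.ball c₀ R) := diam_ball_ge c₀ R hR
  have hdiam0 : 0 < Metric.diam (Metric.ball c₀ R) := by linarith
  have step1 : Real.sqrt 2 / 4 * (d / Metric.diam (Metric.ball c₀ R)) ≤
      Real.sqrt 2 / 4 * (d / (2*R)) := by
    have h2r : (0:ℝ) < 2*R := by linarith
    have : d / Metric.diam (Metric.ball c₀ R) ≤ d / (2*R) :=
      div_le_div_of_nonneg_left hd.le h2r hdiam
    have hs2 : (0:ℝ) ≤ Real.sqrt 2 / 4 := by positivity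
    exact mul_le_mul_of_nonneg_left this hs2
  refine le_trans step1 ?_
  -- now show √2/4 * (d/(2R)) ≤ sin
  have hsq : (Real.sqrt 2 / 4 * (d / (2*R)))^2 ≤ (Real.sin (∠ w p a))^2 := by
    have hcos : Real.cos (∠ w p a) = P / (d * ‖A‖) := by
      rw [hangeq, InnerProductGeometry.cos_angle, ← hP, hun]
    have hsin2 : (Real.sin (∠ w p a))^2 = 1 - (P/(d*‖A‖))^2 := by
      rw [Real.sin_sq, hcos]
    have hlhs : (Real.sqrt 2 / 4 * (d / (2*R)))^2 = d^2/(32*R^2) := by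
      rw [mul_pow, div_pow, div_pow, Real.sq_sqrt (by norm_num : (0:ℝ) ≤ 2)]
      ring
    rw [hlhs, hsin2]
    have hN : (0:ℝ) < x^2 + t^2 := by rw [← hAA]; positivity
    have hPx : (P/(d*‖A‖))^2 = x^2/(x^2+t^2) := by
      rw [← hdx, div_pow, mul_pow, mul_pow, hAA]
      exact mul_div_mul_left _ _ (by positivity : (d:ℝ)^2 ≠ 0)
    rw [hPx]
    have e : 1 - x^2/(x^2+t^2) = t^2/(x^2+t^2) := by field_simp; ring
    rw [e, div_le_div_iff₀ (by positivity) hN]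
    linarith [hkey]
  have := Real.sqrt_le_sqrt hsq
  rw [Real.sqrt_sq (by positivity), Real.sqrt_sq hsin0] at this
  exact this
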